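/- Let X ⊆ ℝ² be a fence, let p ∈ X, and let r > 0. If S_r(p) ∩ X is totally disconnected and no arc contained in X is a bend at S_r(p), then U_r(p) ∩ X is a pierced open subset of the space X. -/

import Mathlib

open Set Filter Topology Metric

noncomputable section

/-- An arc in a topological space: a subset homeomorphic to the closed unit
interval `[0,1]`. -/
def IsArc {X : Type*} [TopologicalSpace X] (A : Set X) : Prop :=
  Nonempty (Set.Icc (0 : ℝ) 1 ≃ₜ A)

/-- `x` is an endpoint of the arc `A`: it is the image of `0` or `1` under some
homeomorphism from `[0,1]` onto `A`. -/
def IsArcEndpoint {X : Type*} [TopologicalSpace X] (A : Set X) (x : X) : Prop :=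
  ∃ e : Set.Icc (0 : ℝ) 1 ≃ₜ A,
    (e ⟨0, by norm_num⟩ : X) = x ∨ (e ⟨1, by norm_num⟩ : X) = x

/-- A point `x` on the frontier of an open set `U` is a piercing point of `U` if
for every open `V ∋ x` and every arc `α` in the space containing `x` with `x` not
an endpoint of `α`, the set `α ∩ V` meets both `U` and the complement of the
closure of `U`. -/
def IsPiercingPoint {X : Type*} [TopologicalSpace X] (U : Set X) (x : X) : Prop :=
  x ∈ frontier U ∧
    ∀ V : Set X, IsOpen V → x ∈ V →
      ∀ α : Set X, IsArc α → x ∈ α → ¬ IsArcEndpoint α x →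
        (α ∩ V ∩ U).Nonempty ∧ (α ∩ V ∩ (closure U)ᶜ).Nonempty

/-- An open set is pierced if every point of its frontier is a piercing point. -/
def IsPierced {X : Type*} [TopologicalSpace X] (U : Set X) : Prop :=
  IsOpen U ∧ ∀ x ∈ frontier U, IsPiercingPoint U x

/-- A space has the Jure property if its topology has a basis of pierced open sets. -/
def HasJureProperty (X : Type*) [TopologicalSpace X] : Prop :=
  ∃ B : Set (Set X), TopologicalSpace.IsTopologicalBasis B ∧ ∀ U ∈ B, IsPierced U

/-- A fence: a compact metric space each of whose connected components is an arc
or a single point. -/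
def IsFenceSpace (X : Type*) [MetricSpace X] : Prop :=
  CompactSpace X ∧
    ∀ x : X, IsArc (connectedComponent x) ∨ connectedComponent x = {x}

/-- `X` is a fan with vertex `v`: a continuum which is the union of a collection
of arcs any two of which meet exactly at `v`, and in which the intersection of
any two subcontinua is connected. -/
def IsFanWithVertex (X : Type*) [MetricSpace X] (v : X) : Prop :=
  Nonempty X ∧ CompactSpace X ∧ ConnectedSpace X ∧
    (∃ 𝓛 : Set (Set X), (∀ L ∈ 𝓛, IsArc L) ∧ ⋃₀ 𝓛 = Set.univ ∧
      ∀ L ∈ 𝓛, ∀ L' ∈ 𝓛, L ≠ L' → L ∩ L' = {v}) ∧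
    ∀ H K : Set X, H.Nonempty → IsCompact H → IsPreconnected H →
      K.Nonempty → IsCompact K → IsPreconnected K → IsPreconnected (H ∩ K)

/-- The Euclidean plane. -/
abbrev Plane : Type := EuclideanSpace ℝ (Fin 2)

/-- The closed annulus `A_{rq}(p)` between the circles of radii `r` and `q`
centered at `p`. -/
def closedAnnulus (p : Plane) (r q : ℝ) : Set Plane :=
  {x | min r q ≤ dist x p ∧ dist x p ≤ max r q}

/-- A fence inside the plane: a compact set each of whose connected components
is an arc or a single point. -/
def IsFenceSet (X : Set Plane) : Prop :=
  IsCompact X ∧ ∀ x ∈ X,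
    IsArc (connectedComponentIn X x) ∨ connectedComponentIn X x = {x}

/-- `β` is a bend at `S_r(p)` terminating at `S_q(p)`: an arc `β ⊆ X` contained
in the closed annulus `A_{rq}(p)`, meeting `S_r(p)`, and meeting `S_q(p)`
exactly in its two endpoints. -/
def IsBendTerminating (X : Set Plane) (p : Plane) (r q : ℝ) (β : Set Plane) : Prop :=
  IsArc β ∧ β ⊆ X ∧ β ⊆ closedAnnulus p r q ∧
    (β ∩ Metric.sphere p r).Nonempty ∧
    β ∩ Metric.sphere p q = {x | IsArcEndpoint β x}

/-- `β` is a bend at `S_r(p)`: a bend terminating at `S_q(p)` for some `q > 0`. -/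
def IsBendAt (X : Set Plane) (p : Plane) (r : ℝ) (β : Set Plane) : Prop :=
  ∃ q > 0, IsBendTerminating X p r q β

/-- The bend `β` (terminating at `S_q(p)`) separates `ϑ` from `∞`: there is an
arc `α ⊆ D_q(p)` meeting `S_q(p)` exactly at the endpoints of `β` such that `ϑ`
lies in a bounded connected component of the complement of `α ∪ β`. -/
def SeparatesFromInfinity (p : Plane) (q : ℝ) (β : Set Plane) (ϑ : Plane) : Prop :=
  ∃ α : Set Plane, IsArc α ∧ α ⊆ Metric.closedBall p q ∧
    α ∩ Metric.sphere p q = {x | IsArcEndpoint β x} ∧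
    ϑ ∉ α ∪ β ∧ Bornology.IsBounded (connectedComponentIn ((α ∪ β)ᶜ) ϑ)

/-- `𝔅_{qrϑ}`: the set of all bends at `S_r(p)` terminating at `S_q(p)` that
separate `ϑ` from `∞`. -/
def Bends (X : Set Plane) (p : Plane) (q r : ℝ) (ϑ : Plane) : Set (Set Plane) :=
  {β | IsBendTerminating X p r q β ∧ SeparatesFromInfinity p q β ϑ}

/-- Topological limit superior of a sequence of sets:
`⋂_N closure (⋃_{n ≥ N} A n)`. -/
def setLimsup {X : Type*} [TopologicalSpace X] (A : ℕ → Set X) : Set X :=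
  ⋂ N : ℕ, closure (⋃ n, ⋃ _ : N ≤ n, A n)

/-- The point `p + q • (cos θ, sin θ)` of the circle `S_q(p)`. -/
def circlePoint (p : Plane) (q θ : ℝ) : Plane :=
  p + (q * Real.cos θ) • EuclideanSpace.single (0 : Fin 2) (1 : ℝ)
    + (q * Real.sin θ) • EuclideanSpace.single (1 : Fin 2) (1 : ℝ)

/-! ### Auxiliary lemmas -/

section ArcLemmas

lemma self_homeo_boundary (h : Set.Icc (0:ℝ) 1 ≃ₜ Set.Icc (0:ℝ) 1)
    (c : Set.Icc (0:ℝ) 1) (hc : (c : ℝ) = 0 ∨ (c : ℝ) = 1) :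
    ((h c : Set.Icc (0:ℝ) 1) : ℝ) = 0 ∨ ((h c : Set.Icc (0:ℝ) 1) : ℝ) = 1 := by
  by_contra hm
  push_neg at hm
  obtain ⟨hm0, hm1⟩ := hm
  set m : ℝ := ((h c : Set.Icc (0:ℝ) 1) : ℝ) with hmdef
  have hmIcc : m ∈ Set.Icc (0:ℝ) 1 := (h c).2
  have hm0' : 0 < m := lt_of_le_of_ne hmIcc.1 (Ne.symm hm0)
  have hm1' : m < 1 := lt_of_le_of_ne hmIcc.2 hm1
  set F : ℝ → ℝ := fun s => ((h (Set.projIcc 0 1 zero_le_one s) : Set.Icc (0:ℝ) 1) : ℝ) with hF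
  have hFc : Continuous F :=
    continuous_subtype_val.comp (h.continuous.comp continuous_projIcc)
  set S : Set ℝ := Set.Icc (0:ℝ) 1 \ {(c : ℝ)} with hS
  have hSpre : IsPreconnected S := by
    rcases hc with hc | hc
    · have : S = Set.Ioc (0:ℝ) 1 := by
        rw [hS, hc]
        ext s
        simp only [Set.mem_diff, Set.mem_Icc, Set.mem_singleton_iff, Set.mem_Ioc]
        constructor
        · rintro ⟨⟨h1, h2⟩, h3⟩; exact ⟨lt_of_le_of_ne h1 (Ne.symm h3), h2⟩
        · rintro ⟨h1, h2⟩; exact ⟨⟨h1.le, h2⟩, h1.ne'⟩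
      rw [this]; exact isPreconnected_Ioc
    · have : S = Set.Ico (0:ℝ) 1 := by
        rw [hS, hc]
        ext s
        simp only [Set.mem_diff, Set.mem_Icc, Set.mem_singleton_iff, Set.mem_Ico]
        constructor
        · rintro ⟨⟨h1, h2⟩, h3⟩; exact ⟨h1, lt_of_le_of_ne h2 h3⟩
        · rintro ⟨h1, h2⟩; exact ⟨⟨h1, h2.le⟩, h2.ne⟩
      rw [this]; exact isPreconnected_Ico
  have hT : IsPreconnected (F '' S) := hSpre.image F hFc.continuousOn
  have hFval : ∀ s (hs : s ∈ Set.Icc (0:ℝ) 1), F s = ((h ⟨s, hs⟩ : Set.Icc (0:ℝ) 1) : ℝ) := by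
    intro s hs; rw [hF]; simp [Set.projIcc_of_mem zero_le_one hs]
  have hmem : ∀ z : Set.Icc (0:ℝ) 1, (z : ℝ) ≠ m → (z : ℝ) ∈ F '' S := by
    intro z hz
    obtain ⟨u, hu⟩ := h.surjective z
    have huc : (u : ℝ) ≠ (c : ℝ) := by
      intro heq
      apply hz
      have : u = c := Subtype.ext heq
      rw [this] at hu
      rw [← hu, hmdef]
    refine ⟨(u : ℝ), ⟨u.2, huc⟩, ?_⟩
    rw [hFval _ u.2, Subtype.coe_eta, hu]
  have h0T : (0:ℝ) ∈ F '' S := hmem ⟨0, by norm_num⟩ (by simpa using hm0'.ne)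
  have h1T : (1:ℝ) ∈ F '' S := hmem ⟨1, by norm_num⟩ (by simpa using hm1'.ne')
  have hmT : m ∈ F '' S := (hT.ordConnected.out h0T h1T) ⟨hm0'.le, hm1'.le⟩
  obtain ⟨s, hsS, hsF⟩ := hmT
  apply hsS.2
  have : h (Set.projIcc 0 1 zero_le_one s) = h c := Subtype.ext hsF
  have := h.injective this
  rw [Set.projIcc_of_mem zero_le_one hsS.1] at this
  exact congrArg Subtype.val this

lemma arc_endpoint_iff {Y : Type*} [TopologicalSpace Y] {A : Set Y}
    (e : Set.Icc (0 : ℝ) 1 ≃ₜ A) (z : Y) :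
    IsArcEndpoint A z ↔ (z = (e ⟨0, by norm_num⟩ : Y) ∨ z = (e ⟨1, by norm_num⟩ : Y)) := by
  constructor
  · rintro ⟨e', he'⟩
    set h : Set.Icc (0:ℝ) 1 ≃ₜ Set.Icc (0:ℝ) 1 := e'.trans e.symm with hh
    have key : ∀ (c : Set.Icc (0:ℝ) 1), (c:ℝ) = 0 ∨ (c:ℝ) = 1 →
        (z = (e' c : Y) → (z = (e ⟨0, by norm_num⟩ : Y) ∨ z = (e ⟨1, by norm_num⟩ : Y))) := by
      intro c hc hz
      have h1 : e (h c) = e' c := by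
        rw [hh]; simp
      rcases self_homeo_boundary h c hc with hb | hb
      · left
        have : h c = ⟨0, by norm_num⟩ := Subtype.ext hb
        rw [hz, ← h1, this]
      · right
        have : h c = ⟨1, by norm_num⟩ := Subtype.ext hb
        rw [hz, ← h1, this]
    rcases he' with he' | he'
    · exact key ⟨0, by norm_num⟩ (Or.inl rfl) he'.symm
    · exact key ⟨1, by norm_num⟩ (Or.inr rfl) he'.symm
  · rintro (hz | hz)
    · exact ⟨e, Or.inl hz.symm⟩
    · exact ⟨e, Or.inr hz.symm⟩

lemma exists_arc_param {Y : Type*} [TopologicalSpace Y] [T2Space Y] (φ : ℝ → Y) {a b : ℝ}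
    (hab : a < b)
    (hc : ContinuousOn φ (Set.Icc a b)) (hi : Set.InjOn φ (Set.Icc a b)) :
    ∃ e : Set.Icc (0:ℝ) 1 ≃ₜ ↥(φ '' Set.Icc a b),
      (e ⟨0, by norm_num⟩ : Y) = φ a ∧ (e ⟨1, by norm_num⟩ : Y) = φ b := by
  set g : Set.Icc a b → Y := (Set.Icc a b).restrict φ with hg
  have hgc : Continuous g := hc.restrict
  have hgi : Function.Injective g := fun u v h => Subtype.ext (hi u.2 v.2 h)
  have hemb := (hgc.isClosedEmbedding hgi).toIsEmbedding
  have hrange : Set.range g = φ '' Set.Icc a b := Set.range_restrict φ (Set.Icc a b)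
  set H : Set.Icc a b ≃ₜ ↥(φ '' Set.Icc a b) :=
    (Topology.IsEmbedding.toHomeomorph hemb).trans (Homeomorph.setCongr hrange) with hH
  have hHval : ∀ u : Set.Icc a b, ((H u : ↥(φ '' Set.Icc a b)) : Y) = φ u := fun u => rfl
  refine ⟨(iccHomeoI a b hab).symm.trans H, ?_, ?_⟩
  · have h0 : (iccHomeoI a b hab).symm ⟨0, by norm_num⟩ = ⟨a, ⟨le_refl a, hab.le⟩⟩ := by
      apply Subtype.ext; simp
    simp only [Homeomorph.trans_apply, h0, hHval]
  · have h1 : (iccHomeoI a b hab).symm ⟨1, by norm_num⟩ = ⟨b, ⟨hab.le, le_refl b⟩⟩ := by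
      apply Subtype.ext; simp
    simp only [Homeomorph.trans_apply, h1, hHval]

lemma arc_and_endpoints {Y : Type*} [TopologicalSpace Y] [T2Space Y] {φ : ℝ → Y} {a b : ℝ}
    (hab : a < b)
    (hc : ContinuousOn φ (Set.Icc a b)) (hi : Set.InjOn φ (Set.Icc a b)) :
    IsArc (φ '' Set.Icc a b) ∧ {z | IsArcEndpoint (φ '' Set.Icc a b) z} = {φ a, φ b} := by
  obtain ⟨e, h0, h1⟩ := exists_arc_param φ hab hc hi
  refine ⟨⟨e⟩, ?_⟩
  ext z
  simp only [Set.mem_setOf_eq, Set.mem_insert_iff, Set.mem_singleton_iff]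
  rw [arc_endpoint_iff e z, h0, h1]

end ArcLemmas

section CrossLemmas

lemma last_cross {f : ℝ → ℝ} {a t q : ℝ} (hat : a ≤ t) (hc : ContinuousOn f (Set.Icc a t))
    (hft : f t < q) (hfa : q < f a) :
    ∃ a', a ≤ a' ∧ a' < t ∧ f a' = q ∧ ∀ s, a' < s → s ≤ t → f s < q := by
  set S := Set.Icc a t ∩ f ⁻¹' {q} with hSdef
  have hScl : IsClosed S := hc.preimage_isClosed_of_isClosed isClosed_Icc isClosed_singleton
  have hSne : S.Nonempty := by
    obtain ⟨s, hs, hfs⟩ := intermediate_value_Icc' hat hc ⟨hft.le, hfa.le⟩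
    exact ⟨s, hs, hfs⟩
  have hbdd : BddAbove S := ⟨t, fun s hs => hs.1.2⟩
  set a' := sSup S with ha'
  have haS : a' ∈ S := hScl.csSup_mem hSne hbdd
  have hfa' : f a' = q := haS.2
  have haa : a ≤ a' := haS.1.1
  have ha't : a' < t := lt_of_le_of_ne haS.1.2 (fun h => by rw [h] at hfa'; exact hft.ne hfa')
  have hne : ∀ s, a' < s → s ≤ t → f s ≠ q := by
    intro s h1 h2 heq
    exact absurd (le_csSup hbdd ⟨⟨haa.trans h1.le, h2⟩, heq⟩) (not_le.mpr h1)
  refine ⟨a', haa, ha't, hfa', fun s h1 h2 => ?_⟩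
  by_contra hge
  push_neg at hge
  have hlt : q < f s := lt_of_le_of_ne hge (fun h => hne s h1 h2 h.symm)
  obtain ⟨s', hs', hfs'⟩ := intermediate_value_Icc' h2
    (hc.mono (Set.Icc_subset_Icc (haa.trans h1.le) le_rfl)) ⟨hft.le, hlt.le⟩
  exact hne s' (h1.trans_le hs'.1) hs'.2 hfs'

lemma first_cross {f : ℝ → ℝ} {t b q : ℝ} (htb : t ≤ b) (hc : ContinuousOn f (Set.Icc t b))
    (hft : f t < q) (hfb : q < f b) :
    ∃ b', t < b' ∧ b' ≤ b ∧ f b' = q ∧ ∀ s, t ≤ s → s < b' → f s < q := by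
  have hmaps : Set.MapsTo Neg.neg (Set.Icc (-b) (-t)) (Set.Icc t b) := by
    intro s hs; exact ⟨by linarith [hs.2], by linarith [hs.1]⟩
  have hgc : ContinuousOn (f ∘ Neg.neg) (Set.Icc (-b) (-t)) :=
    hc.comp continuous_neg.continuousOn hmaps
  obtain ⟨a', h1, h2, h3, h4⟩ := last_cross (f := f ∘ Neg.neg) (by linarith)
    hgc (by simpa using hft) (by simpa using hfb)
  refine ⟨-a', by linarith, by linarith, by simpa using h3, fun s hs1 hs2 => ?_⟩
  have := h4 (-s) (by linarith) (by linarith)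
  simpa using this

end CrossLemmas

lemma bend_exists {X : Set Plane} {p : Plane} {Φ : ℝ → Plane} {r q a' t b' : ℝ}
    (hΦc : Continuous Φ) (hΦX : ∀ s, Φ s ∈ X)
    (hinj : Set.InjOn Φ (Set.Icc a' b'))
    (hat : a' < t) (htb : t < b') (hq : 0 < q)
    (hdt : dist (Φ t) p = r)
    (hda : dist (Φ a') p = q) (hdb : dist (Φ b') p = q)
    (hlow : ∀ s ∈ Set.Icc a' b', min r q ≤ dist (Φ s) p)
    (hhigh : ∀ s ∈ Set.Icc a' b', dist (Φ s) p ≤ max r q)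
    (hint : ∀ s ∈ Set.Ioo a' b', dist (Φ s) p ≠ q) :
    IsBendAt X p r (Φ '' Set.Icc a' b') := by
  have hab : a' < b' := hat.trans htb
  obtain ⟨harc, hends⟩ := arc_and_endpoints hab hΦc.continuousOn hinj
  refine ⟨q, hq, harc, ?_, ?_, ?_, ?_⟩
  · rintro y ⟨s, _, rfl⟩; exact hΦX s
  · rintro y ⟨s, hs, rfl⟩; exact ⟨hlow s hs, hhigh s hs⟩
  · exact ⟨Φ t, ⟨t, ⟨hat.le, htb.le⟩, rfl⟩, Metric.mem_sphere.mpr hdt⟩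
  · rw [hends]
    ext y
    simp only [Set.mem_inter_iff, Set.mem_image, Metric.mem_sphere, Set.mem_insert_iff,
      Set.mem_singleton_iff]
    constructor
    · rintro ⟨⟨s, hs, rfl⟩, hdq⟩
      rcases eq_or_lt_of_le hs.1 with h | h
      · left; rw [← h]
      rcases eq_or_lt_of_le hs.2 with h2 | h2
      · right; rw [h2]
      · exact absurd hdq (hint s ⟨h, h2⟩)
    · rintro (rfl | rfl)
      · exact ⟨⟨a', ⟨le_rfl, hab.le⟩, rfl⟩, hda⟩
      · exact ⟨⟨b', ⟨hab.le, le_rfl⟩, rfl⟩, hdb⟩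


set_option maxHeartbeats 1000000 in
/-- If `X ⊆ ℝ²` is a fence, `p ∈ X`, `r > 0`, `S_r(p) ∩ X` is
totally disconnected and no arc in `X` is a bend at `S_r(p)`, then
`U_r(p) ∩ X` is a pierced open subset of the space `X`. -/
theorem no_bend_implies_pierced (X : Set Plane) (hX : IsFenceSet X)
    (p : Plane) (hp : p ∈ X) (r : ℝ) (hr : 0 < r)
    (htd : IsTotallyDisconnected (Metric.sphere p r ∩ X))
    (hnb : ∀ β : Set Plane, ¬ IsBendAt X p r β) :
    IsPierced (Subtype.val ⁻¹' Metric.ball p r : Set X) := by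
  set U : Set ↥X := (Subtype.val ⁻¹' Metric.ball p r : Set ↥X) with hU
  have hUopen : IsOpen U := Metric.isOpen_ball.preimage continuous_subtype_val
  refine ⟨hUopen, ?_⟩
  intro x hx
  have hclU : closure U ⊆ Subtype.val ⁻¹' Metric.closedBall p r :=
    closure_minimal (Set.preimage_mono Metric.ball_subset_closedBall)
      (Metric.isClosed_closedBall.preimage continuous_subtype_val)
  have hxcl : x ∈ closure U := hx.1
  have hxnotU : x ∉ U := by
    rw [hUopen.frontier_eq] at hx; exact hx.2
  have hxle : dist (x : Plane) p ≤ r := hclU hxcl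
  have hxge : r ≤ dist (x : Plane) p := not_lt.mp hxnotU
  have hxr : dist (x : Plane) p = r := le_antisymm hxle hxge
  refine ⟨hx, ?_⟩
  intro V hV hxV α hα hxα hne
  obtain ⟨e⟩ := hα
  obtain ⟨tt, htt⟩ := e.surjective ⟨x, hxα⟩
  set t : ℝ := (tt : ℝ) with htdef
  have ht01 : t ∈ Set.Icc (0:ℝ) 1 := tt.2
  have ht0 : 0 < t := by
    rcases lt_or_eq_of_le ht01.1 with h | h
    · exact h
    · exfalso
      apply hne
      refine ⟨e, Or.inl ?_⟩
      have h' : tt = ⟨0, by norm_num⟩ := Subtype.ext h.symm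
      rw [← h', htt]
  have ht1 : t < 1 := by
    rcases lt_or_eq_of_le ht01.2 with h | h
    · exact h
    · exfalso
      apply hne
      refine ⟨e, Or.inr ?_⟩
      have h' : tt = ⟨1, by norm_num⟩ := Subtype.ext h
      rw [← h', htt]
  set Φ : ℝ → Plane := fun s => ((e (Set.projIcc 0 1 zero_le_one s)).1 : ↥X).1 with hΦ
  have hΦc : Continuous Φ :=
    continuous_subtype_val.comp (continuous_subtype_val.comp
      (e.continuous.comp continuous_projIcc))
  have hfc : Continuous (fun s => dist (Φ s) p) := hΦc.dist continuous_const
  have hΦmem : ∀ s, ((e (Set.projIcc 0 1 zero_le_one s)).1 : ↥X) ∈ α :=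
    fun s => (e (Set.projIcc 0 1 zero_le_one s)).2
  have hΦX : ∀ s, Φ s ∈ X := fun s => ((e (Set.projIcc 0 1 zero_le_one s)).1 : ↥X).2
  have hΦinjOn : Set.InjOn Φ (Set.Icc 0 1) := by
    intro s1 hs1 s2 hs2 hq
    have h1 : ((e (Set.projIcc 0 1 zero_le_one s1)).1 : ↥X)
        = ((e (Set.projIcc 0 1 zero_le_one s2)).1 : ↥X) := Subtype.ext hq
    have h2 := e.injective (Subtype.ext h1)
    rw [Set.projIcc_of_mem zero_le_one hs1, Set.projIcc_of_mem zero_le_one hs2] at h2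
    exact congrArg Subtype.val h2
  have hproj_t : Set.projIcc 0 1 zero_le_one t = tt := by
    rw [Set.projIcc_of_mem zero_le_one ht01]
  have hΦt : Φ t = (x : Plane) := by
    rw [hΦ]
    simp only [hproj_t, htt]
  have hdt : dist (Φ t) p = r := by rw [hΦt, hxr]
  -- a neighborhood [a, b] of t mapped into V
  have hWopen : IsOpen ((fun u : Set.Icc (0:ℝ) 1 => ((e u).1 : ↥X)) ⁻¹' V) :=
    hV.preimage (continuous_subtype_val.comp e.continuous)
  have htW : tt ∈ ((fun u : Set.Icc (0:ℝ) 1 => ((e u).1 : ↥X)) ⁻¹' V) := by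
    simp only [Set.mem_preimage, htt]
    exact hxV
  obtain ⟨ε, hε, hball⟩ := Metric.isOpen_iff.mp hWopen tt htW
  set a : ℝ := max (t/2) (t - ε/2) with hadef
  set b : ℝ := min ((t+1)/2) (t + ε/2) with hbdef
  have hat : a < t := max_lt (by linarith) (by linarith)
  have htb : t < b := lt_min (by linarith) (by linarith)
  have ha0 : 0 ≤ a := le_max_of_le_left (by linarith)
  have hb1 : b ≤ 1 := min_le_of_left_le (by linarith)
  have hsub : Set.Icc a b ⊆ Set.Icc (0:ℝ) 1 := Set.Icc_subset_Icc ha0 hb1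
  have hVmem : ∀ s ∈ Set.Icc a b, ((e (Set.projIcc 0 1 zero_le_one s)).1 : ↥X) ∈ V := by
    intro s hs
    apply hball
    rw [Metric.mem_ball, Subtype.dist_eq, Set.projIcc_of_mem zero_le_one (hsub hs)]
    have h1 : s ≤ t + ε/2 := hs.2.trans (min_le_of_right_le le_rfl)
    have h2 : t - ε/2 ≤ s := (le_max_of_le_right le_rfl).trans hs.1
    rw [Real.dist_eq]
    rw [abs_lt]
    constructor <;> [linarith; linarith]
  -- no flat piece on the sphere
  have hflat : ∀ c d : ℝ, c ∈ Set.Icc (0:ℝ) 1 → d ∈ Set.Icc (0:ℝ) 1 → c < d →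
      ∃ s ∈ Set.Icc c d, dist (Φ s) p ≠ r := by
    intro c d hc hd hcd
    by_contra hcon
    push_neg at hcon
    have hsubcd : Set.Icc c d ⊆ Set.Icc (0:ℝ) 1 := Set.Icc_subset_Icc hc.1 hd.2
    have himg : Φ '' Set.Icc c d ⊆ Metric.sphere p r ∩ X := by
      rintro y ⟨s, hs, rfl⟩
      exact ⟨Metric.mem_sphere.mpr (hcon s hs), hΦX s⟩
    have hpre : IsPreconnected (Φ '' Set.Icc c d) :=
      isPreconnected_Icc.image Φ hΦc.continuousOn
    have hsing := htd _ himg hpre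
    have hne' : Φ c ≠ Φ d := fun h =>
      hcd.ne (hΦinjOn (hsubcd ⟨le_rfl, hcd.le⟩) (hsubcd ⟨hcd.le, le_rfl⟩) h)
    exact hne' (hsing ⟨c, ⟨le_rfl, hcd.le⟩, rfl⟩ ⟨d, ⟨hcd.le, le_rfl⟩, rfl⟩)
  constructor
  · -- α ∩ V ∩ U is nonempty
    by_contra hcon
    rw [Set.not_nonempty_iff_eq_empty] at hcon
    have hge : ∀ s ∈ Set.Icc a b, r ≤ dist (Φ s) p := by
      intro s hs
      by_contra hlt
      push_neg at hlt
      have hyU : ((e (Set.projIcc 0 1 zero_le_one s)).1 : ↥X) ∈ α ∩ V ∩ U :=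
        ⟨⟨hΦmem s, hVmem s hs⟩, by simpa [hU, Metric.mem_ball] using hlt⟩
      rw [hcon] at hyU
      exact hyU
    obtain ⟨a0, ha0m, ha0ne⟩ := hflat a t ⟨ha0, ht01.2.trans' hat.le⟩ ht01 hat
    have ha0b : a0 ∈ Set.Icc a b := ⟨ha0m.1, ha0m.2.trans htb.le⟩
    have ha0r : r < dist (Φ a0) p := lt_of_le_of_ne (hge a0 ha0b) (Ne.symm ha0ne)
    have ha0t : a0 < t := lt_of_le_of_ne ha0m.2 (fun h => by rw [h, hdt] at ha0r; linarith)
    obtain ⟨b0, hb0m, hb0ne⟩ := hflat t b ht01 ⟨ha0.trans (hat.trans htb).le, hb1⟩ htb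
    have hb0b : b0 ∈ Set.Icc a b := ⟨hb0m.1.trans' hat.le, hb0m.2⟩
    have hb0r : r < dist (Φ b0) p := lt_of_le_of_ne (hge b0 hb0b) (Ne.symm hb0ne)
    have htb0 : t < b0 := lt_of_le_of_ne hb0m.1 (fun h => by rw [← h, hdt] at hb0r; linarith)
    set q : ℝ := (r + min (dist (Φ a0) p) (dist (Φ b0) p)) / 2 with hqdef
    have hminr : r < min (dist (Φ a0) p) (dist (Φ b0) p) := lt_min ha0r hb0r
    have hrq : r < q := by rw [hqdef]; linarith
    have hqa0 : q < dist (Φ a0) p := by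
      have := min_le_left (dist (Φ a0) p) (dist (Φ b0) p); rw [hqdef]; linarith
    have hqb0 : q < dist (Φ b0) p := by
      have := min_le_right (dist (Φ a0) p) (dist (Φ b0) p); rw [hqdef]; linarith
    obtain ⟨a', ha'1, ha'2, ha'3, ha'4⟩ := last_cross (f := fun s => dist (Φ s) p) ha0t.le
      hfc.continuousOn (show dist (Φ t) p < q by rw [hdt]; exact hrq) hqa0
    obtain ⟨b', hb'1, hb'2, hb'3, hb'4⟩ := first_cross (f := fun s => dist (Φ s) p) htb0.le
      hfc.continuousOn (show dist (Φ t) p < q by rw [hdt]; exact hrq) hqb0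
    have ha'3r : dist (Φ a') p = q := ha'3
    have hb'3r : dist (Φ b') p = q := hb'3
    have ha'4r : ∀ s, a' < s → s ≤ t → dist (Φ s) p < q := ha'4
    have hb'4r : ∀ s, t ≤ s → s < b' → dist (Φ s) p < q := hb'4
    have ha'b : Set.Icc a' b' ⊆ Set.Icc a b :=
      Set.Icc_subset_Icc (ha0m.1.trans ha'1) (hb'2.trans hb0m.2)
    apply hnb (Φ '' Set.Icc a' b')
    refine bend_exists hΦc hΦX (hΦinjOn.mono (ha'b.trans hsub)) ha'2 hb'1
      (hr.trans hrq) hdt ha'3r hb'3r ?_ ?_ ?_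
    · intro s hs
      rw [min_eq_left hrq.le]
      exact hge s (ha'b hs)
    · intro s hs
      rw [max_eq_right hrq.le]
      rcases le_total s t with hst | hst
      · rcases eq_or_lt_of_le hs.1 with h | h
        · rw [← h, ha'3r]
        · exact (ha'4r s h hst).le
      · rcases eq_or_lt_of_le hs.2 with h | h
        · rw [h, hb'3r]
        · exact (hb'4r s hst h).le
    · intro s hs
      rcases le_total s t with hst | hst
      · exact (ha'4r s hs.1 hst).ne
      · exact (hb'4r s hst hs.2).ne
  · -- α ∩ V ∩ (closure U)ᶜ is nonempty
    by_contra hcon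
    rw [Set.not_nonempty_iff_eq_empty] at hcon
    have hle : ∀ s ∈ Set.Icc a b, dist (Φ s) p ≤ r := by
      intro s hs
      by_contra hgt
      push_neg at hgt
      have hycl : ((e (Set.projIcc 0 1 zero_le_one s)).1 : ↥X) ∈ (closure U)ᶜ := by
        intro hcl
        have h1 := hclU hcl
        simp only [Set.mem_preimage, Metric.mem_closedBall] at h1
        exact absurd h1 (not_le.mpr hgt)
      have hy : ((e (Set.projIcc 0 1 zero_le_one s)).1 : ↥X) ∈ α ∩ V ∩ (closure U)ᶜ :=
        ⟨⟨hΦmem s, hVmem s hs⟩, hycl⟩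
      rw [hcon] at hy
      exact hy
    obtain ⟨a0, ha0m, ha0ne⟩ := hflat a t ⟨ha0, ht01.2.trans' hat.le⟩ ht01 hat
    have ha0b : a0 ∈ Set.Icc a b := ⟨ha0m.1, ha0m.2.trans htb.le⟩
    have ha0r : dist (Φ a0) p < r := lt_of_le_of_ne (hle a0 ha0b) ha0ne
    have ha0t : a0 < t := lt_of_le_of_ne ha0m.2 (fun h => by rw [h, hdt] at ha0r; linarith)
    obtain ⟨b0, hb0m, hb0ne⟩ := hflat t b ht01 ⟨ha0.trans (hat.le.trans htb.le), hb1⟩ htb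
    have hb0b : b0 ∈ Set.Icc a b := ⟨hb0m.1.trans' hat.le, hb0m.2⟩
    have hb0r : dist (Φ b0) p < r := lt_of_le_of_ne (hle b0 hb0b) hb0ne
    have htb0 : t < b0 := lt_of_le_of_ne hb0m.1 (fun h => by rw [← h, hdt] at hb0r; linarith)
    set q : ℝ := (max (dist (Φ a0) p) (dist (Φ b0) p) + r) / 2 with hqdef
    have hmaxr : max (dist (Φ a0) p) (dist (Φ b0) p) < r := max_lt ha0r hb0r
    have hqr : q < r := by rw [hqdef]; linarith
    have hq0 : 0 < q := by
      have h1 : (0:ℝ) ≤ dist (Φ a0) p := dist_nonneg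
      have h2 := le_max_left (dist (Φ a0) p) (dist (Φ b0) p)
      rw [hqdef]; linarith
    have hqa0 : dist (Φ a0) p < q := by
      have := le_max_left (dist (Φ a0) p) (dist (Φ b0) p); rw [hqdef]; linarith
    have hqb0 : dist (Φ b0) p < q := by
      have := le_max_right (dist (Φ a0) p) (dist (Φ b0) p); rw [hqdef]; linarith
    obtain ⟨a', ha'1, ha'2, ha'3, ha'4⟩ := last_cross (f := fun s => -(dist (Φ s) p)) ha0t.le
      hfc.neg.continuousOn (show -dist (Φ t) p < -q by rw [hdt]; linarith) (by simpa using hqa0)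
    obtain ⟨b', hb'1, hb'2, hb'3, hb'4⟩ := first_cross (f := fun s => -(dist (Φ s) p)) htb0.le
      hfc.neg.continuousOn (show -dist (Φ t) p < -q by rw [hdt]; linarith) (by simpa using hqb0)
    have ha'3' : dist (Φ a') p = q := by
      have h := ha'3; linarith
    have hb'3' : dist (Φ b') p = q := by
      have h := hb'3; linarith
    have ha'4' : ∀ s, a' < s → s ≤ t → q < dist (Φ s) p := by
      intro s h1 h2; have h := ha'4 s h1 h2; linarith
    have hb'4' : ∀ s, t ≤ s → s < b' → q < dist (Φ s) p := by
      intro s h1 h2; have h := hb'4 s h1 h2; linarith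
    have ha'b : Set.Icc a' b' ⊆ Set.Icc a b :=
      Set.Icc_subset_Icc (ha0m.1.trans ha'1) (hb'2.trans hb0m.2)
    apply hnb (Φ '' Set.Icc a' b')
    refine bend_exists hΦc hΦX (hΦinjOn.mono (ha'b.trans hsub)) ha'2 hb'1
      hq0 hdt ha'3' hb'3' ?_ ?_ ?_
    · intro s hs
      rw [min_eq_right hqr.le]
      rcases le_total s t with hst | hst
      · rcases eq_or_lt_of_le hs.1 with h | h
        · rw [← h, ha'3']
        · exact (ha'4' s h hst).le
      · rcases eq_or_lt_of_le hs.2 with h | h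
        · rw [h, hb'3']
        · exact (hb'4' s hst h).le
    · intro s hs
      rw [max_eq_left hqr.le]
      exact hle s (ha'b hs)
    · intro s hs
      rcases le_total s t with hst | hst
      · exact (ha'4' s hs.1 hst).ne'
      · exact (hb'4' s hst hs.2).ne'
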